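/- Let ε, μ satisfy 0 < ε₀ ≤ ε ≤ ε₁, 0 < μ₀ ≤ μ ≤ μ₁, and ε − ε_*, μ − μ_* ∈ W^2_1(ℝ) for constants ε_*, μ_*. Then the transformed coefficients ε̃, μ̃ obtained via y(z) = ∫_0^z √(εμ) satisfy ε̃ − ε_* ∈ W^2_1(ℝ) and μ̃ − μ_* ∈ W^2_1(ℝ). -/

import Mathlib

open MeasureTheory

/-- Let `0 < ε₀ ≤ ε ≤ ε₁`, `0 < μ₀ ≤ μ ≤ μ₁`, and suppose
`ε − ε_*, μ − μ_* ∈ W²₁(ℝ)` (function and first two derivatives in `L¹`).  Then the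
Liouville-transformed coefficients `ε̃, μ̃` with `ε̃(y(z)) = ε(z)`, `μ̃(y(z)) = μ(z)`,
`y(z) = ∫_0^z √(εμ)`, satisfy `ε̃ − ε_* ∈ W²₁(ℝ)` and `μ̃ − μ_* ∈ W²₁(ℝ)`. -/
theorem transformed_coefficients_stabilize
    (ε μ ε' μ' ε'' μ'' : ℝ → ℝ) (ε₀ ε₁ μ₀ μ₁ εs μs : ℝ)
    (hε₀ : 0 < ε₀) (hμ₀ : 0 < μ₀)
    (hεb : ∀ z, ε₀ ≤ ε z ∧ ε z ≤ ε₁) (hμb : ∀ z, μ₀ ≤ μ z ∧ μ z ≤ μ₁)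
    (hdε : ∀ z, HasDerivAt ε (ε' z) z) (hdε' : ∀ z, HasDerivAt ε' (ε'' z) z)
    (hdμ : ∀ z, HasDerivAt μ (μ' z) z) (hdμ' : ∀ z, HasDerivAt μ' (μ'' z) z)
    (hεW : Integrable (fun z => ε z - εs) volume ∧ Integrable ε' volume ∧
      Integrable ε'' volume)
    (hμW : Integrable (fun z => μ z - μs) volume ∧ Integrable μ' volume ∧
      Integrable μ'' volume)
    (y : ℝ → ℝ)
    (hy : ∀ z, y z = ∫ t in (0:ℝ)..z, Real.sqrt (ε t * μ t)) :
    ∃ εt μt εt' μt' εt'' μt'' : ℝ → ℝ,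
      (∀ z, εt (y z) = ε z) ∧ (∀ z, μt (y z) = μ z) ∧
      (∀ w, HasDerivAt εt (εt' w) w) ∧ (∀ w, HasDerivAt εt' (εt'' w) w) ∧
      (∀ w, HasDerivAt μt (μt' w) w) ∧ (∀ w, HasDerivAt μt' (μt'' w) w) ∧
      (Integrable (fun w => εt w - εs) volume ∧ Integrable εt' volume ∧
        Integrable εt'' volume) ∧
      (Integrable (fun w => μt w - μs) volume ∧ Integrable μt' volume ∧
        Integrable μt'' volume) := by
  -- basic positivity
  have hεpos : ∀ x, 0 < ε x := fun x => lt_of_lt_of_le hε₀ (hεb x).1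
  have hμpos : ∀ x, 0 < μ x := fun x => lt_of_lt_of_le hμ₀ (hμb x).1
  set g : ℝ → ℝ := fun t => Real.sqrt (ε t * μ t) with hgdef
  have hgpos : ∀ t, 0 < g t := fun t => Real.sqrt_pos.mpr (mul_pos (hεpos t) (hμpos t))
  set c₀ : ℝ := Real.sqrt (ε₀ * μ₀) with hc₀def
  set c₁ : ℝ := Real.sqrt (ε₁ * μ₁) with hc₁def
  have hc₀pos : 0 < c₀ := Real.sqrt_pos.mpr (mul_pos hε₀ hμ₀)
  have hglb : ∀ t, c₀ ≤ g t := fun t =>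
    Real.sqrt_le_sqrt (mul_le_mul (hεb t).1 (hμb t).1 hμ₀.le (hεpos t).le)
  have hgub : ∀ t, g t ≤ c₁ := fun t =>
    Real.sqrt_le_sqrt (mul_le_mul (hεb t).2 (hμb t).2 (hμpos t).le
      (le_trans (hεpos t).le (hεb t).2))
  -- continuity
  have hεc : Continuous ε := continuous_iff_continuousAt.mpr fun x => (hdε x).continuousAt
  have hμc : Continuous μ := continuous_iff_continuousAt.mpr fun x => (hdμ x).continuousAt
  have hε'c : Continuous ε' := continuous_iff_continuousAt.mpr fun x => (hdε' x).continuousAt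
  have hμ'c : Continuous μ' := continuous_iff_continuousAt.mpr fun x => (hdμ' x).continuousAt
  have hgc : Continuous g := (hεc.mul hμc).sqrt
  -- derivative of g
  set g' : ℝ → ℝ := fun t => 1 / (2 * Real.sqrt (ε t * μ t)) * (ε' t * μ t + ε t * μ' t)
    with hg'def
  have hdg : ∀ t, HasDerivAt g (g' t) t := by
    intro t
    exact (Real.hasDerivAt_sqrt (ne_of_gt (mul_pos (hεpos t) (hμpos t)))).comp t
      ((hdε t).mul (hdμ t))
  have hsqpos : ∀ t, 0 < Real.sqrt (ε t * μ t) := fun t =>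
    Real.sqrt_pos.mpr (mul_pos (hεpos t) (hμpos t))
  have hsqlb : ∀ t, c₀ ≤ Real.sqrt (ε t * μ t) := fun t =>
    Real.sqrt_le_sqrt (mul_le_mul (hεb t).1 (hμb t).1 hμ₀.le (hεpos t).le)
  have hg'c : Continuous g' := by
    have h2 : Continuous fun t => 2 * Real.sqrt (ε t * μ t) := continuous_const.mul hgc
    exact ((continuous_const.div h2 fun t => by have := hsqpos t; positivity)).mul
      ((hε'c.mul hμc).add (hεc.mul hμ'c))
  -- identify y
  have hyeq : y = fun u => ∫ t in (0:ℝ)..u, g t := funext hy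
  subst hyeq
  have hy' : ∀ x, HasDerivAt (fun u => ∫ t in (0:ℝ)..u, g t) (g x) x := fun x =>
    intervalIntegral.integral_hasDerivAt_right (hgc.intervalIntegrable 0 x)
      (hgc.stronglyMeasurableAtFilter volume (nhds x)) (hgc.continuousAt)
  set y : ℝ → ℝ := fun u => ∫ t in (0:ℝ)..u, g t with hydef
  have hymono : StrictMono y := strictMono_of_hasDerivAt_pos hy' hgpos
  have hyc : Continuous y := continuous_iff_continuousAt.mpr fun x => (hy' x).continuousAt
  -- growth bounds
  have hlow : ∀ x, 0 ≤ x → c₀ * x ≤ y x := by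
    intro x hx
    have h := intervalIntegral.integral_mono_on (μ := volume) hx
      (intervalIntegrable_const (c := c₀)) (hgc.intervalIntegrable 0 x)
      (fun t _ => hglb t)
    calc c₀ * x = ∫ _ in (0:ℝ)..x, c₀ := by
          rw [intervalIntegral.integral_const]; ring_nf
      _ ≤ ∫ t in (0:ℝ)..x, g t := h
      _ = y x := rfl
  have hhigh : ∀ x, x ≤ 0 → y x ≤ c₀ * x := by
    intro x hx
    have h := intervalIntegral.integral_mono_on (μ := volume) hx
      (intervalIntegrable_const (c := c₀)) (hgc.intervalIntegrable x 0)
      (fun t _ => hglb t)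
    calc y x = -∫ t in x..(0:ℝ), g t := intervalIntegral.integral_symm x 0
      _ ≤ -∫ _ in x..(0:ℝ), c₀ := neg_le_neg h
      _ = c₀ * x := by rw [intervalIntegral.integral_const, smul_eq_mul]; ring
  have htop : Filter.Tendsto y Filter.atTop Filter.atTop := by
    refine Filter.tendsto_atTop_mono' Filter.atTop (f₁ := fun x => c₀ * x) ?_ ?_
    · exact (Filter.eventually_ge_atTop (0:ℝ)).mono fun x hx => hlow x hx
    · exact Filter.Tendsto.const_mul_atTop hc₀pos Filter.tendsto_id
  have hbot : Filter.Tendsto y Filter.atBot Filter.atBot := by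
    refine Filter.tendsto_atBot_mono' Filter.atBot (f₁ := fun x => c₀ * x) ?_ ?_
    · exact (Filter.eventually_le_atBot (0:ℝ)).mono fun x hx => hhigh x hx
    · exact Filter.Tendsto.const_mul_atBot hc₀pos Filter.tendsto_id
  have hysurj : Function.Surjective y := hyc.surjective htop hbot
  -- inverse function
  set e : ℝ ≃o ℝ := StrictMono.orderIsoOfSurjective y hymono hysurj with hedef
  set z : ℝ → ℝ := fun w => e.symm w with hzdef
  have hzy : ∀ x, z (y x) = x := fun x =>
    StrictMono.orderIsoOfSurjective_symm_apply_self y hymono hysurj x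
  have hyz : ∀ w, y (z w) = w := by
    intro w
    have := e.apply_symm_apply w
    rwa [StrictMono.coe_orderIsoOfSurjective] at this
  have hzc : Continuous z := e.symm.continuous
  have hz : ∀ w, HasDerivAt z ((g (z w))⁻¹) w := by
    intro w
    exact HasDerivAt.of_local_left_inverse hzc.continuousAt (hy' (z w))
      (ne_of_gt (hgpos (z w))) (Filter.Eventually.of_forall hyz)
  -- change of variables principle
  have hchg : ∀ F : ℝ → ℝ, Integrable F volume ↔
      Integrable (fun x => |g x| * F (y x)) volume := by
    intro F
    have h := integrableOn_image_iff_integrableOn_abs_deriv_smul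
      (MeasurableSet.univ) (fun x _ => (hy' x).hasDerivWithinAt)
      (hymono.injective.injOn) F
    rw [Set.image_univ, Set.range_eq_univ.mpr hysurj, integrableOn_univ,
      integrableOn_univ] at h
    simpa [smul_eq_mul] using h
  -- boundedness of derivatives from W^2_1
  have hbd : ∀ (f' f'' : ℝ → ℝ), (∀ x, HasDerivAt f' (f'' x) x) →
      Integrable f'' volume → ∃ B, ∀ x, |f' x| ≤ B := by
    intro f' f'' hd hint
    refine ⟨|f' 0| + ∫ t, |f'' t|, fun x => ?_⟩
    have h1 : ∫ t in (0:ℝ)..x, f'' t = f' x - f' 0 :=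
      intervalIntegral.integral_eq_sub_of_hasDerivAt (fun t _ => hd t)
        (hint.intervalIntegrable)
    have h2 : |∫ t in (0:ℝ)..x, f'' t| ≤ ∫ t, |f'' t| := by
      calc |∫ t in (0:ℝ)..x, f'' t| ≤ ∫ t in Set.uIoc (0:ℝ) x, |f'' t| := by
            simpa [Real.norm_eq_abs] using
              intervalIntegral.norm_integral_le_integral_norm_uIoc (f := f'') (a := (0:ℝ))
                (b := x) (μ := volume)
        _ ≤ ∫ t, |f'' t| :=
            setIntegral_le_integral hint.abs (Filter.Eventually.of_forall fun t => abs_nonneg _)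
    have h3 : |f' x| ≤ |f' 0| + |f' x - f' 0| := by
      have := abs_add_le (f' 0) (f' x - f' 0); simpa using this
    rw [h1] at h2; linarith
  obtain ⟨Bε, hBε⟩ := hbd ε' ε'' hdε' hεW.2.2
  obtain ⟨Bμ, hBμ⟩ := hbd μ' μ'' hdμ' hμW.2.2
  have hBεnn : 0 ≤ Bε := le_trans (abs_nonneg _) (hBε 0)
  have hBμnn : 0 ≤ Bμ := le_trans (abs_nonneg _) (hBμ 0)
  -- g' bounded
  have hg'bd : ∀ t, |g' t| ≤ 1 / (2 * c₀) * (Bε * μ₁ + ε₁ * Bμ) := by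
    intro t
    have h1 : |1 / (2 * Real.sqrt (ε t * μ t))| ≤ 1 / (2 * c₀) := by
      have hst := hsqpos t
      rw [abs_of_pos (one_div_pos.mpr (by linarith))]
      have h2c : (2:ℝ) * c₀ ≤ 2 * Real.sqrt (ε t * μ t) := by
        have := hsqlb t; linarith
      exact one_div_le_one_div_of_le (by positivity) h2c
    have h2 : |ε' t * μ t + ε t * μ' t| ≤ Bε * μ₁ + ε₁ * Bμ := by
      have := abs_add_le (ε' t * μ t) (ε t * μ' t)
      have h3 : |ε' t * μ t| ≤ Bε * μ₁ := by
        rw [abs_mul, abs_of_pos (hμpos t)]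
        exact mul_le_mul (hBε t) (hμb t).2 (hμpos t).le hBεnn
      have h4 : |ε t * μ' t| ≤ ε₁ * Bμ := by
        rw [abs_mul, abs_of_pos (hεpos t)]
        exact mul_le_mul (hεb t).2 (hBμ t) (abs_nonneg _)
          (le_trans (hεpos t).le (hεb t).2)
      linarith
    calc |g' t| = |1 / (2 * Real.sqrt (ε t * μ t))| * |ε' t * μ t + ε t * μ' t| := by
          rw [hg'def]; exact abs_mul _ _
      _ ≤ 1 / (2 * c₀) * (Bε * μ₁ + ε₁ * Bμ) :=
          mul_le_mul h1 h2 (abs_nonneg _) (by positivity)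
  -- main construction for one coefficient
  have key : ∀ (f f' f'' : ℝ → ℝ) (fs : ℝ), (∀ x, HasDerivAt f (f' x) x) →
      (∀ x, HasDerivAt f' (f'' x) x) →
      Integrable (fun x => f x - fs) volume → Integrable f' volume →
      Integrable f'' volume →
      ∃ F F' F'' : ℝ → ℝ, (∀ x, F (y x) = f x) ∧ (∀ w, HasDerivAt F (F' w) w) ∧
        (∀ w, HasDerivAt F' (F'' w) w) ∧ Integrable (fun w => F w - fs) volume ∧
        Integrable F' volume ∧ Integrable F'' volume := by
    intro f f' f'' fs hdf hdf' hif hif' hif''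
    refine ⟨fun w => f (z w), fun w => f' (z w) * (g (z w))⁻¹,
      fun w => f'' (z w) * (g (z w))⁻¹ * (g (z w))⁻¹ +
        f' (z w) * (-(g' (z w) * (g (z w))⁻¹) / (g (z w)) ^ 2),
      fun x => by simp only [hzy], fun w => (hdf (z w)).comp w (hz w), ?_, ?_, ?_, ?_⟩
    · intro w
      have h1 : HasDerivAt (fun w => f' (z w)) (f'' (z w) * (g (z w))⁻¹) w :=
        (hdf' (z w)).comp w (hz w)
      have h2 : HasDerivAt (fun w => g (z w)) (g' (z w) * (g (z w))⁻¹) w :=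
        (hdg (z w)).comp w (hz w)
      have h3 := h2.inv (ne_of_gt (hgpos (z w)))
      exact h1.mul h3
    · rw [hchg]
      have heq : (fun x => |g x| * ((fun w => f (z w)) (y x) - fs)) =
          fun x => |g x| * (f x - fs) := by
        funext x; simp only [hzy]
      rw [heq]
      exact hif.bdd_mul (hgc.abs.aestronglyMeasurable)
        (c := c₁) (ae_of_all _ fun x => by rw [Real.norm_eq_abs, abs_abs, abs_of_pos (hgpos x)]; exact hgub x)
    · rw [hchg]
      have heq : (fun x => |g x| * ((fun w => f' (z w) * (g (z w))⁻¹) (y x))) = f' := by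
        funext x
        simp only [hzy]
        rw [abs_of_pos (hgpos x)]
        field_simp
        exact mul_div_cancel_left₀ _ (ne_of_gt (hgpos x))
      rw [heq]; exact hif'
    · rw [hchg]
      have heq : (fun x => |g x| * ((fun w => f'' (z w) * (g (z w))⁻¹ * (g (z w))⁻¹ +
          f' (z w) * (-(g' (z w) * (g (z w))⁻¹) / (g (z w)) ^ 2)) (y x))) =
          fun x => (g x)⁻¹ * f'' x + (-(g' x) * ((g x) ^ 2)⁻¹) * f' x := by
        funext x
        simp only [hzy]
        rw [abs_of_pos (hgpos x)]
        have hne := ne_of_gt (hgpos x)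
        field_simp
      rw [heq]
      refine Integrable.add ?_ ?_
      · refine hif''.bdd_mul ((hgc.inv₀ fun x => ne_of_gt (hgpos x)).aestronglyMeasurable)
          (c := c₀⁻¹) (ae_of_all _ fun x => ?_)
        rw [Real.norm_eq_abs, abs_of_pos (inv_pos.mpr (hgpos x))]
        exact inv_anti₀ hc₀pos (hglb x)
      · refine hif'.bdd_mul ?_ (c := (1 / (2 * c₀) * (Bε * μ₁ + ε₁ * Bμ)) * (c₀ ^ 2)⁻¹)
          (ae_of_all _ fun x => ?_)
        · exact (hg'c.neg.mul ((hgc.pow 2).inv₀ fun x =>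
            ne_of_gt (pow_pos (hgpos x) 2))).aestronglyMeasurable
        · rw [Real.norm_eq_abs, abs_mul, abs_neg]
          have h1 : |((g x) ^ 2)⁻¹| ≤ (c₀ ^ 2)⁻¹ := by
            rw [abs_of_pos (inv_pos.mpr (pow_pos (hgpos x) 2))]
            exact inv_anti₀ (pow_pos hc₀pos 2)
              (pow_le_pow_left₀ hc₀pos.le (hglb x) 2)
          exact mul_le_mul (hg'bd x) h1 (abs_nonneg _) (le_trans (abs_nonneg _) (hg'bd 0))
  obtain ⟨εt, εt', εt'', h1, h2, h3, h4, h5, h6⟩ :=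
    key ε ε' ε'' εs hdε hdε' hεW.1 hεW.2.1 hεW.2.2
  obtain ⟨μt, μt', μt'', k1, k2, k3, k4, k5, k6⟩ :=
    key μ μ' μ'' μs hdμ hdμ' hμW.1 hμW.2.1 hμW.2.2
  exact ⟨εt, μt, εt', μt', εt'', μt'', h1, k1, h2, h3, k2, k3, ⟨h4, h5, h6⟩, ⟨k4, k5, k6⟩⟩
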